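/- Suppose h : ℂⁿ → ℂ is an entire function of exponential type at most τ = (τ_1, …, τ_n) and that |h| is bounded on ℝⁿ by a constant D ≥ 0. Then |h(z)| ≤ D · exp(τ_1 |Im z_1| + ⋯ + τ_n |Im z_n|) for all z = (z_1, …, z_n) ∈ ℂⁿ. -/

import Mathlib

open Complex Filter Set

private lemma upperHalf_bound {g : ℂ → ℂ} {τ : ℝ} (hτ : 0 < τ) (hg : Differentiable ℂ g)
    (htype : ∀ ε : ℝ, 0 < ε → ∃ A : ℝ, ∀ z : ℂ,
      ‖g z‖ ≤ A * Real.exp ((τ + ε) * ‖z‖))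
    {D : ℝ} (hD : 0 ≤ D) (hbdd : ∀ x : ℝ, ‖g (x : ℂ)‖ ≤ D) :
    ∀ z : ℂ, 0 ≤ z.im → ‖g z‖ ≤ D * Real.exp (τ * z.im) := by
  intro z hz
  have key : ∀ ε : ℝ, 0 < ε → ‖g z‖ ≤ D * Real.exp ((τ + ε) * z.im) := by
    intro ε hε
    obtain ⟨A, hA⟩ := htype ε hε
    have hA0 : 0 ≤ A := by
      have := hA 0
      simp only [norm_zero, mul_zero, Real.exp_zero, mul_one] at this
      exact le_trans (norm_nonneg _) this
    set c : ℝ := τ + ε with hc_def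
    have hc : 0 < c := by positivity
    set F : ℂ → ℂ := fun w => g (I * w) * Complex.exp (-(c : ℂ) * w) with hF
    have hFd : DiffContOnCl ℂ F {w : ℂ | 0 < w.re} := by
      apply Differentiable.diffContOnCl
      exact (hg.comp (differentiable_id.const_mul I)).mul
        ((differentiable_id.const_mul (-(c : ℂ))).cexp)
    have hFabs : ∀ w : ℂ, ‖F w‖ =
        ‖g (I * w)‖ * Real.exp (-c * w.re) := by
      intro w
      rw [hF]
      simp only [norm_mul, Complex.norm_exp]
      congr 2
      simp [Complex.mul_re]
    have hFle : ∀ w : ℂ, ‖F w‖ ≤ A * Real.exp (2 * c * ‖w‖) := by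
      intro w
      rw [hFabs]
      have h1 : ‖g (I * w)‖ ≤ A * Real.exp (c * ‖w‖) := by
        have := hA (I * w)
        simpa using this
      have h2 : Real.exp (-c * w.re) ≤ Real.exp (c * ‖w‖) := by
        apply Real.exp_le_exp.2
        have : |w.re| ≤ ‖w‖ := Complex.abs_re_le_norm w
        nlinarith [abs_nonneg w.re, neg_abs_le w.re]
      calc ‖g (I * w)‖ * Real.exp (-c * w.re)
          ≤ (A * Real.exp (c * ‖w‖)) * Real.exp (c * ‖w‖) := by
            apply mul_le_mul h1 h2 (Real.exp_pos _).le
            positivity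
        _ = A * Real.exp (2 * c * ‖w‖) := by
            rw [mul_assoc, ← Real.exp_add]; ring_nf
    have hmain : ‖F (-I * z)‖ ≤ D := by
      apply PhragmenLindelof.right_half_plane_of_bounded_on_real hFd
      · refine ⟨1, one_lt_two, 2 * c, ?_⟩
        apply Asymptotics.IsBigO.of_bound A
        filter_upwards with w
        rw [Real.norm_eq_abs, Real.abs_exp, Real.rpow_one]
        exact hFle w
      · apply isBoundedUnder_of_eventually_le (a := A)
        filter_upwards [eventually_ge_atTop (0 : ℝ)] with x hx
        rw [hFabs]
        have h1 : ‖g (I * x)‖ ≤ A * Real.exp (c * x) := by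
          have := hA (I * x)
          simp only [norm_mul, Complex.norm_I, one_mul, Complex.norm_real, Real.norm_eq_abs,
            _root_.abs_of_nonneg hx] at this ⊢
          exact this
        have : ‖g (I * x)‖ * Real.exp (-c * (x : ℂ).re)
            ≤ (A * Real.exp (c * x)) * Real.exp (-c * x) := by
          simp only [Complex.ofReal_re]
          exact mul_le_mul_of_nonneg_right h1 (Real.exp_pos _).le
        refine le_trans this ?_
        rw [mul_assoc, ← Real.exp_add]
        simp
      · intro x
        have : I * (↑x * I) = ((-x : ℝ) : ℂ) := by push_cast; ring_nf; simp [Complex.I_sq]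
        rw [hFabs, this]
        have him : ((x : ℂ) * I).re = 0 := by simp
        rw [him]
        simpa using hbdd (-x)
      · simp [Complex.neg_re, Complex.mul_re]; linarith [hz]
    have heq : I * (-I * z) = z := by ring_nf; simp [Complex.I_sq]
    rw [hFabs, heq] at hmain
    have hre : (-I * z).re = z.im := by simp [Complex.mul_re]
    rw [hre] at hmain
    have := mul_le_mul_of_nonneg_right hmain (Real.exp_pos (c * z.im)).le
    rw [mul_assoc, ← Real.exp_add] at this
    simpa using this
  -- take the limit ε → 0⁺
  have hT : Tendsto (fun ε : ℝ => D * Real.exp ((τ + ε) * z.im)) (nhdsWithin 0 (Ioi 0))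
      (nhds (D * Real.exp (τ * z.im))) := by
    apply Tendsto.mono_left _ nhdsWithin_le_nhds
    have : Continuous (fun ε : ℝ => D * Real.exp ((τ + ε) * z.im)) := by continuity
    have h := this.tendsto 0
    simpa using h
  refine ge_of_tendsto hT ?_
  filter_upwards [self_mem_nhdsWithin] with ε hε
  exact key ε hε

private lemma oneVar_bound {g : ℂ → ℂ} {τ : ℝ} (hτ : 0 < τ) (hg : Differentiable ℂ g)
    (htype : ∀ ε : ℝ, 0 < ε → ∃ A : ℝ, ∀ z : ℂ,
      ‖g z‖ ≤ A * Real.exp ((τ + ε) * ‖z‖))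
    {D : ℝ} (hD : 0 ≤ D) (hbdd : ∀ x : ℝ, ‖g (x : ℂ)‖ ≤ D) :
    ∀ z : ℂ, ‖g z‖ ≤ D * Real.exp (τ * |z.im|) := by
  intro z
  rcases le_total 0 z.im with hz | hz
  · rw [_root_.abs_of_nonneg hz]
    exact upperHalf_bound hτ hg htype hD hbdd z hz
  · rw [_root_.abs_of_nonpos hz]
    have hneg := upperHalf_bound (g := fun w => g (-w)) hτ (hg.comp differentiable_neg)
      (fun ε hε => by
        obtain ⟨A, hA⟩ := htype ε hε
        exact ⟨A, fun w => by simpa using hA (-w)⟩)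
      hD (fun x => by
        have := hbdd (-x)
        push_cast at this
        simpa using this)
      (-z) (by simpa using hz)
    simpa using hneg

/-- An entire function `g : ℂⁿ → ℂ` is of exponential type at most `τ` if for all `ε > 0`
there is `A_ε` with `|g(z)| ≤ A_ε exp((τ₁+ε)|z₁| + ⋯ + (τₙ+ε)|zₙ|)` for all `z`. -/
def ExpTypeLE {n : ℕ} (g : (Fin n → ℂ) → ℂ) (τ : Fin n → ℝ) : Prop :=
  ∀ ε : ℝ, 0 < ε → ∃ A : ℝ, ∀ z : Fin n → ℂ,
    ‖g z‖ ≤ A * Real.exp (∑ k, (τ k + ε) * ‖z k‖)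

/-- A multivariable Phragmén–Lindelöf-type bound: if `h : ℂⁿ → ℂ` is entire of exponential
type at most `τ` and `|h| ≤ D` on `ℝⁿ`, then
`|h(z)| ≤ D exp(τ₁|Im z₁| + ⋯ + τₙ|Im zₙ|)` on all of `ℂⁿ`. -/
theorem expType_bound_on_Cn {n : ℕ} (h : (Fin n → ℂ) → ℂ) (τ : Fin n → ℝ)
    (hτ : ∀ k, 0 < τ k) (hent : Differentiable ℂ h) (htype : ExpTypeLE h τ)
    (D : ℝ) (hD : 0 ≤ D)
    (hbdd : ∀ x : Fin n → ℝ, ‖h (fun j => (x j : ℂ))‖ ≤ D) :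
    ∀ z : Fin n → ℂ,
      ‖h z‖ ≤ D * Real.exp (∑ k, τ k * |(z k).im|) := by
  have key : ∀ m : ℕ, ∀ z : Fin n → ℂ, (∀ k : Fin n, m ≤ (k : ℕ) → (z k).im = 0) →
      ‖h z‖ ≤ D * Real.exp (∑ k, τ k * |(z k).im|) := by
    intro m
    induction m with
    | zero =>
      intro z hz
      have hsum : (∑ k, τ k * |(z k).im|) = 0 :=
        Finset.sum_eq_zero fun k _ => by rw [hz k (Nat.zero_le _)]; simp
      rw [hsum, Real.exp_zero, mul_one]
      have hzeq : z = fun j => (((z j).re : ℝ) : ℂ) := by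
        funext j
        rw [Complex.ext_iff]
        refine ⟨by simp, by simp [hz j (Nat.zero_le _)]⟩
      rw [hzeq]
      exact hbdd fun j => (z j).re
    | succ m ih =>
      intro z hz
      by_cases hm : m < n
      · set i : Fin n := ⟨m, hm⟩ with hi
        set G : ℂ → ℂ := fun w => h (Function.update z i w) with hG
        have hupd : Differentiable ℂ (fun w : ℂ => Function.update z i w) := by
          rw [differentiable_pi]
          intro j
          by_cases hj : j = i
          · subst hj; simpa [Function.update_apply] using differentiable_id
          · simpa [Function.update_apply, hj] using (differentiable_const (z j))
        have hGd : Differentiable ℂ G := hent.comp hupd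
        set S : ℝ := ∑ k ∈ Finset.univ.erase i, τ k * |(z k).im| with hS
        have hS0 : 0 ≤ S := Finset.sum_nonneg fun k _ => mul_nonneg (hτ k).le (abs_nonneg _)
        have hGtype : ∀ ε : ℝ, 0 < ε → ∃ A : ℝ, ∀ w : ℂ,
            ‖G w‖ ≤ A * Real.exp ((τ i + ε) * ‖w‖) := by
          intro ε hε
          obtain ⟨A, hA⟩ := htype ε hε
          refine ⟨A * Real.exp (∑ k ∈ Finset.univ.erase i, (τ k + ε) * ‖z k‖),
            fun w => ?_⟩
          have h1 := hA (Function.update z i w)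
          have hsum : (∑ k, (τ k + ε) * ‖Function.update z i w k‖) =
              (τ i + ε) * ‖w‖ +
                ∑ k ∈ Finset.univ.erase i, (τ k + ε) * ‖z k‖ := by
            rw [← Finset.add_sum_erase _ _ (Finset.mem_univ i), Function.update_self]
            congr 1
            exact Finset.sum_congr rfl fun k hk => by
              rw [Function.update_of_ne (Finset.ne_of_mem_erase hk)]
          rw [hsum, Real.exp_add] at h1
          calc ‖G w‖ ≤ _ := h1
            _ = _ := by ring
        have hGbdd : ∀ x : ℝ, ‖G (x : ℂ)‖ ≤ D * Real.exp S := by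
          intro x
          have hcond : ∀ k : Fin n, m ≤ (k : ℕ) → ((Function.update z i (x : ℂ)) k).im = 0 := by
            intro k hk
            by_cases hki : k = i
            · subst hki; simp
            · rw [Function.update_of_ne hki]
              apply hz
              rcases Nat.lt_or_ge (k : ℕ) (m + 1) with hlt | hge
              · exfalso
                apply hki
                have : (k : ℕ) = m := by omega
                exact Fin.ext this
              · exact hge
          have := ih (Function.update z i (x : ℂ)) hcond
          have hsum2 : (∑ k, τ k * |((Function.update z i (x : ℂ)) k).im|) = S := by
            rw [← Finset.add_sum_erase _ _ (Finset.mem_univ i), Function.update_self]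
            simp only [Complex.ofReal_im, abs_zero, mul_zero, zero_add]
            exact Finset.sum_congr rfl fun k hk => by
              rw [Function.update_of_ne (Finset.ne_of_mem_erase hk)]
          rwa [hsum2] at this
        have hone := oneVar_bound (hτ i) hGd hGtype (by positivity) hGbdd (z i)
        rw [hG] at hone
        simp only [Function.update_eq_self] at hone
        have hsum3 : (∑ k, τ k * |(z k).im|) = τ i * |(z i).im| + S := by
          rw [hS, ← Finset.add_sum_erase _ _ (Finset.mem_univ i)]
        rw [hsum3, Real.exp_add]
        calc ‖h z‖ ≤ D * Real.exp S * Real.exp (τ i * |(z i).im|) := hone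
          _ = D * (Real.exp (τ i * |(z i).im|) * Real.exp S) := by ring
      · exact ih z fun k hk => hz k (by omega)
  intro z
  exact key n z fun k hk => absurd k.isLt (by omega)
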